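/- arXiv:1501.05905 — 3 statements merged into one kernel-verified Lean document; each statement's English description precedes it below -/
import Mathlib

section
/- Let H be a complex Hilbert space with symplectic form ω(u,v) := -Im⟪u,v⟫ and let T : H → H be a continuous ℝ-linear bijection satisfying ω(Tu,Tv) = ω(u,v) for all u,v ∈ H. If for some radii r, R > 0 and some unit vector e ∈ H we have T(B(r)) ⊆ Z(R), then r ≤ R. -/
/-- **Linear non-squeezing**: a continuous linear symplectomorphism `T` of a
complex Hilbert space `H` (with symplectic form `ω u v = -Im ⟪u, v⟫`) mapping
the ball of radius `r` into the cylinder of radius `R` over a unit vector `e`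
forces `r ≤ R`. -/
theorem linear_nonsqueezing
    {H : Type*} [NormedAddCommGroup H] [InnerProductSpace ℂ H] [CompleteSpace H]
    (T : H →L[ℝ] H) (hTbij : Function.Bijective T)
    (hTsymp : ∀ u v : H, -(inner ℂ (T u) (T v) : ℂ).im = -(inner ℂ u v : ℂ).im)
    (r R : ℝ) (hr : 0 < r) (hR : 0 < R)
    (e : H) (he : ‖e‖ = 1)
    (hsq : ∀ u : H, ‖u‖ < r → ‖(inner ℂ e (T u) : ℂ)‖ < R) :
    r ≤ R := by
  obtain ⟨x, hx⟩ := hTbij.2 e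
  obtain ⟨y, hy⟩ := hTbij.2 (Complex.I • e)
  have hee : (inner ℂ e e : ℂ) = 1 := by
    rw [inner_self_eq_norm_sq_to_K, he]; norm_num
  -- key estimate: if |Im ⟪z, u⟫| < R for all u in the ball, then r‖z‖ ≤ R
  have key : ∀ z : H, (∀ u : H, ‖u‖ < r → |(inner ℂ z u : ℂ).im| < R) → r * ‖z‖ ≤ R := by
    intro z hz
    rcases eq_or_ne z 0 with h0 | h0
    · simp [h0]; linarith
    by_contra hcon
    push_neg at hcon
    have hz0 : 0 < ‖z‖ := norm_pos_iff.mpr h0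
    obtain ⟨t, ht1, ht2⟩ := exists_between (show R / ‖z‖ < r from
      (div_lt_iff₀ hz0).mpr (by linarith))
    have ht0 : 0 < t := lt_trans (div_pos hR hz0) ht1
    set u := (t / ‖z‖ : ℝ) • (Complex.I • z) with hu
    have hnu : ‖u‖ = t := by
      rw [hu, norm_smul, norm_smul, Real.norm_eq_abs, abs_of_pos (div_pos ht0 hz0)]
      simp
      field_simp
    have hiu : (inner ℂ z u : ℂ).im = t * ‖z‖ := by
      rw [hu, RCLike.real_smul_eq_coe_smul (K := ℂ), inner_smul_right, inner_smul_right,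
        inner_self_eq_norm_sq_to_K]
      simp
      field_simp
      rw [← Complex.ofReal_pow, Complex.ofReal_re]
    have habs := hz u (by rw [hnu]; exact ht2)
    rw [hiu] at habs
    have h1 : t * ‖z‖ < R := lt_of_le_of_lt (le_abs_self _) habs
    have h2 : R < t * ‖z‖ := (div_lt_iff₀ hz0).mp ht1
    linarith
  -- apply to x
  have hxR : r * ‖x‖ ≤ R := by
    refine key x (fun u hu => ?_)
    have h1 : (inner ℂ x u : ℂ).im = (inner ℂ e (T u) : ℂ).im := by
      have := hTsymp x u
      rw [hx] at this
      linarith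
    rw [h1]
    exact lt_of_le_of_lt (Complex.abs_im_le_norm _) (hsq u hu)
  -- apply to y
  have hyR : r * ‖y‖ ≤ R := by
    refine key y (fun u hu => ?_)
    have h1 : (inner ℂ y u : ℂ).im = (inner ℂ (Complex.I • e) (T u) : ℂ).im := by
      have := hTsymp y u
      rw [hy] at this
      linarith
    have h2 : (inner ℂ (Complex.I • e) (T u) : ℂ) = -Complex.I * inner ℂ e (T u) := by
      rw [inner_smul_left]
      simp [Complex.ext_iff]
    rw [h1, h2]
    have h3 : (-Complex.I * inner ℂ e (T u)).im = -((inner ℂ e (T u) : ℂ)).re := by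
      simp [Complex.ext_iff]
    rw [h3, abs_neg]
    exact lt_of_le_of_lt (Complex.abs_re_le_norm _) (hsq u hu)
  -- symplectic area of (x, y)
  have hxy : (inner ℂ x y : ℂ).im = 1 := by
    have := hTsymp x y
    rw [hx, hy] at this
    have h2 : (inner ℂ e (Complex.I • e) : ℂ) = Complex.I := by
      rw [inner_smul_right, hee, mul_one]
    rw [h2] at this
    simpa using this.symm
  have hcs : 1 ≤ ‖x‖ * ‖y‖ := by
    calc (1 : ℝ) = |(inner ℂ x y : ℂ).im| := by rw [hxy]; norm_num
      _ ≤ ‖(inner ℂ x y : ℂ)‖ := Complex.abs_im_le_norm _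
      _ ≤ ‖x‖ * ‖y‖ := by exact norm_inner_le_norm x y
  nlinarith [norm_nonneg x, norm_nonneg y]
end

section
/- Galerkin approximation of flows: let H be a real Hilbert space, let X : H → H be Lipschitz with constant L, and let (P_k) be a sequence of orthogonal projections onto closed subspaces of H such that P_k u → u for every u ∈ H. Set X_k := P_k ∘ X ∘ P_k. Suppose φ and φ_k are global flows of X and X_k respectively, i.e. φ(0,u) = u, ∂_t φ(t,u) = X(φ(t,u)), and φ_k(0,u) = u, ∂_t φ_k(t,u) = X_k(φ_k(t,u)) for all t ∈ ℝ, u ∈ H. Then for every t ∈ ℝ and u ∈ H, φ_k(t,u) → φ(t,u) as k → ∞. -/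
open scoped RealInnerProductSpace

open Filter Set Real

section Aux

variable {H : Type*} [NormedAddCommGroup H] [InnerProductSpace ℝ H] [CompleteSpace H]

/-- An idempotent self-adjoint continuous linear map is 1-Lipschitz. -/
lemma proj_lipschitz (Q : H →L[ℝ] H) (hidem : ∀ u : H, Q (Q u) = Q u)
    (hsa : ∀ u v : H, ⟪Q u, v⟫ = ⟪u, Q v⟫) : LipschitzWith 1 Q := by
  have hnorm : ∀ u : H, ‖Q u‖ ≤ ‖u‖ := by
    intro u
    rcases eq_or_lt_of_le (norm_nonneg (Q u)) with h | h
    · rw [← h]; exact norm_nonneg u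
    · have h1 : ‖Q u‖ * ‖Q u‖ ≤ ‖u‖ * ‖Q u‖ := by
        calc ‖Q u‖ * ‖Q u‖ = ⟪Q u, Q u⟫ := (real_inner_self_eq_norm_mul_norm (Q u)).symm
        _ = ⟪u, Q (Q u)⟫ := hsa u (Q u)
        _ = ⟪u, Q u⟫ := by rw [hidem]
        _ ≤ ‖u‖ * ‖Q u‖ := real_inner_le_norm u (Q u)
      exact le_of_mul_le_mul_right h1 h
  refine LipschitzWith.of_dist_le_mul fun u v => ?_
  simp only [dist_eq_norm, NNReal.coe_one, one_mul, ← map_sub]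
  exact hnorm (u - v)

/-- Pointwise convergence of equi-Lipschitz maps to the identity is uniform on
compact sets. -/
lemma unif_on_compact (P : ℕ → H →L[ℝ] H)
    (hlip : ∀ k, LipschitzWith 1 (P k))
    (hconv : ∀ u : H, Tendsto (fun k => P k u) atTop (nhds u))
    {K : Set H} (hK : IsCompact K) {ε : ℝ} (hε : 0 < ε) :
    ∀ᶠ k in atTop, ∀ y ∈ K, dist y (P k y) < ε := by
  have hε4 : 0 < ε / 4 := by linarith
  obtain ⟨s, hs⟩ := hK.elim_finite_subcover (fun y : H => Metric.ball y (ε / 4))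
    (fun y => Metric.isOpen_ball) (fun y hy => Set.mem_iUnion.2 ⟨y, by simpa using hε4⟩)
  have hev : ∀ᶠ k in atTop, ∀ c ∈ s, dist c (P k c) < ε / 2 := by
    rw [Filter.eventually_all_finset]
    intro c _
    have := (hconv c).eventually (Metric.ball_mem_nhds c (by linarith : (0:ℝ) < ε / 2))
    filter_upwards [this] with k hk
    simpa [dist_comm] using hk
  filter_upwards [hev] with k hk y hy
  obtain ⟨c, hcs, hc⟩ := by simpa using hs hy
  have hPc : dist (P k c) (P k y) ≤ dist c y := by
    simpa using (hlip k).dist_le_mul c y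
  have hcy : dist c y < ε / 4 := by simpa [dist_comm] using hc
  calc dist y (P k y) ≤ dist y c + dist c (P k c) + dist (P k c) (P k y) :=
        dist_triangle4 y c (P k c) (P k y)
    _ < ε / 4 + ε / 2 + ε / 4 := by
        have := hk c hcs
        have h3 : dist (P k c) (P k y) ≤ dist c y := hPc
        rw [dist_comm y c]
        linarith
    _ = ε := by ring

/-- Uniform smallness of the Galerkin error along a compact curve. -/
lemma error_unif (L : NNReal) (X : H → H) (hX : LipschitzWith L X)
    (P : ℕ → H →L[ℝ] H)
    (hlip : ∀ k, LipschitzWith 1 (P k))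
    (hconv : ∀ u : H, Tendsto (fun k => P k u) atTop (nhds u))
    (f : ℝ → H) (hf : Continuous f) (b : ℝ)
    {ε : ℝ} (hε : 0 < ε) :
    ∀ᶠ k in atTop, ∀ s ∈ Set.Icc (0:ℝ) b, dist (X (f s)) (P k (X (P k (f s)))) ≤ ε := by
  have hK1 : IsCompact (f '' Set.Icc 0 b) := (isCompact_Icc).image hf
  have hK2 : IsCompact (X '' (f '' Set.Icc 0 b)) := hK1.image hX.continuous
  have hδ : (0:ℝ) < ε / (2 * (L + 1)) := by positivity
  have h1 := unif_on_compact P hlip hconv hK2 (by linarith : (0:ℝ) < ε / 2)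
  have h2 := unif_on_compact P hlip hconv hK1 hδ
  filter_upwards [h1, h2] with k hk1 hk2 s hs
  set y := f s with hy
  have hyK : y ∈ f '' Set.Icc 0 b := ⟨s, hs, rfl⟩
  have hXyK : X y ∈ X '' (f '' Set.Icc 0 b) := ⟨y, hyK, rfl⟩
  have e1 : dist (X y) (P k (X y)) < ε / 2 := hk1 (X y) hXyK
  have e2 : dist y (P k y) < ε / (2 * (L + 1)) := hk2 y hyK
  have e3 : dist (P k (X y)) (P k (X (P k y))) ≤ (L : ℝ) * dist y (P k y) := by
    calc dist (P k (X y)) (P k (X (P k y))) ≤ 1 * dist (X y) (X (P k y)) :=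
          (hlip k).dist_le_mul _ _
      _ = dist (X y) (X (P k y)) := one_mul _
      _ ≤ (L : ℝ) * dist y (P k y) := hX.dist_le_mul y (P k y)
  have hL1 : (L : ℝ) * (ε / (2 * (L + 1))) ≤ ε / 2 := by
    have hL0 : (0:ℝ) ≤ (L : ℝ) := L.coe_nonneg
    have hne : ((L:ℝ) + 1) ≠ 0 := by positivity
    rw [show (L:ℝ) * (ε / (2 * ((L:ℝ) + 1))) = ε / 2 * ((L:ℝ) / ((L:ℝ) + 1)) by
      field_simp]
    have h1 : (L:ℝ) / ((L:ℝ) + 1) ≤ 1 := by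
      rw [div_le_one (by linarith)]; linarith
    nlinarith
  calc dist (X y) (P k (X (P k y)))
      ≤ dist (X y) (P k (X y)) + dist (P k (X y)) (P k (X (P k y))) := dist_triangle _ _ _
    _ ≤ ε / 2 + (L : ℝ) * dist y (P k y) := by linarith
    _ ≤ ε / 2 + (L : ℝ) * (ε / (2 * (L + 1))) := by
        have hL0 : (0:ℝ) ≤ (L : ℝ) := L.coe_nonneg
        nlinarith
    _ ≤ ε / 2 + ε / 2 := by linarith
    _ = ε := by ring

lemma gronwallBound_zero_lin (K ε x : ℝ) :
    gronwallBound 0 K ε x = ε * gronwallBound 0 K 1 x := by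
  by_cases hK : K = 0
  · simp only [gronwallBound, if_pos hK]; ring
  · simp only [gronwallBound, if_neg hK]; ring

lemma gronwallBound_one_nonneg {K b : ℝ} (hK : 0 ≤ K) (hb : 0 ≤ b) :
    0 ≤ gronwallBound 0 K 1 b := by
  by_cases h : K = 0
  · simp [gronwallBound, h, hb]
  · have hKpos : 0 < K := lt_of_le_of_ne hK (Ne.symm h)
    have : (1:ℝ) ≤ exp (K * b) := by
      rw [← exp_zero]
      exact exp_le_exp.2 (by positivity)
    have h2 : (1:ℝ) ≤ exp (K * b) := this
    simp only [gronwallBound, if_neg h, zero_mul, zero_add]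
    exact mul_nonneg (by positivity) (by linarith)

/-- Core Grönwall comparison: if `f` solves `Y` exactly, `fk k` solves `Yk k`
exactly, they agree at `0`, each `Yk k` is `L`-Lipschitz, and
`Yk k ∘ f → Y ∘ f` uniformly on `[0, b]`, then `fk k b → f b`. -/
lemma flow_comparison (L : NNReal) (Y : H → H) (Yk : ℕ → H → H)
    (hYk : ∀ k, LipschitzWith L (Yk k))
    (f : ℝ → H) (fk : ℕ → ℝ → H)
    (hf' : ∀ s, HasDerivAt f (Y (f s)) s)
    (hfk' : ∀ k s, HasDerivAt (fk k) (Yk k (fk k s)) s)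
    (h0 : ∀ k, fk k 0 = f 0)
    (b : ℝ) (hb : 0 ≤ b)
    (herr : ∀ ε : ℝ, 0 < ε →
      ∀ᶠ k in atTop, ∀ s ∈ Set.Icc (0:ℝ) b, dist (Y (f s)) (Yk k (f s)) ≤ ε) :
    Tendsto (fun k => fk k b) atTop (nhds (f b)) := by
  have hfc : Continuous f := by
    rw [continuous_iff_continuousAt]; exact fun s => (hf' s).continuousAt
  have hfkc : ∀ k, Continuous (fk k) := by
    intro k
    rw [continuous_iff_continuousAt]; exact fun s => (hfk' k s).continuousAt
  rw [Metric.tendsto_nhds]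
  intro ε' hε'
  set c := gronwallBound 0 (L : ℝ) 1 b with hc
  have hc0 : 0 ≤ c := gronwallBound_one_nonneg L.coe_nonneg hb
  set ε := ε' / (2 * (c + 1)) with hεdef
  have hε : 0 < ε := by positivity
  filter_upwards [herr ε hε] with k hk
  have key : dist (f b) (fk k b) ≤ gronwallBound 0 (L : ℝ) (ε + 0) (b - 0) := by
    refine dist_le_of_approx_trajectories_ODE (v := fun _ y => Yk k y)
      (fun _ => hYk k) (hfc.continuousOn) (fun s _ => (hf' s).hasDerivWithinAt)
      (fun s hsIco => hk s ⟨hsIco.1, le_of_lt hsIco.2⟩)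
      ((hfkc k).continuousOn) (fun s _ => (hfk' k s).hasDerivWithinAt)
      (fun s _ => by simp) (by simp [h0 k]) b ⟨hb, le_refl b⟩
  rw [add_zero, sub_zero, gronwallBound_zero_lin] at key
  have hlt : ε * c < ε' := by
    have : ε * c = ε' * (c / (2 * (c + 1))) := by rw [hεdef]; ring
    rw [this]
    have h1 : c / (2 * (c + 1)) < 1 := by
      rw [div_lt_one (by positivity)]; linarith
    nlinarith
  rw [dist_comm]
  calc dist (f b) (fk k b) ≤ ε * c := key
    _ < ε' := hlt

end Aux

/-- **Galerkin approximation of flows**: let `X` be a Lipschitz vector field on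
a real Hilbert space `H`, let `P k` be orthogonal projections (idempotent and
self-adjoint continuous linear maps) converging pointwise to the identity, and
let `φ`, `φk k` be global flows of `X` and of `X_k = P k ∘ X ∘ P k`
respectively. Then `φk k t u → φ t u` for every `t` and `u`. -/
theorem galerkin_flow_convergence
    {H : Type*} [NormedAddCommGroup H] [InnerProductSpace ℝ H] [CompleteSpace H]
    (L : NNReal) (X : H → H) (hX : LipschitzWith L X)
    (P : ℕ → H →L[ℝ] H)
    (hidem : ∀ (k : ℕ) (u : H), P k (P k u) = P k u)
    (hselfadj : ∀ (k : ℕ) (u v : H), ⟪P k u, v⟫ = ⟪u, P k v⟫)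
    (hconv : ∀ u : H, Filter.Tendsto (fun k => P k u) Filter.atTop (nhds u))
    (φ : ℝ → H → H) (φk : ℕ → ℝ → H → H)
    (hφ0 : ∀ u : H, φ 0 u = u)
    (hφ' : ∀ (t : ℝ) (u : H), HasDerivAt (fun s => φ s u) (X (φ t u)) t)
    (hφk0 : ∀ (k : ℕ) (u : H), φk k 0 u = u)
    (hφk' : ∀ (k : ℕ) (t : ℝ) (u : H),
      HasDerivAt (fun s => φk k s u) (P k (X (P k (φk k t u)))) t)
    (t : ℝ) (u : H) :
    Filter.Tendsto (fun k => φk k t u) Filter.atTop (nhds (φ t u)) := by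
  have hlip : ∀ k, LipschitzWith 1 (P k) :=
    fun k => proj_lipschitz (P k) (hidem k) (hselfadj k)
  have hYk : ∀ k, LipschitzWith L (fun y => P k (X (P k y))) := by
    intro k
    have := (hlip k).comp (hX.comp (hlip k))
    simp at this; exact this
  rcases le_or_gt 0 t with ht | ht
  · -- forward time
    have hfc : Continuous (fun s => φ s u) := by
      rw [continuous_iff_continuousAt]; exact fun s => (hφ' s u).continuousAt
    exact flow_comparison L X (fun k y => P k (X (P k y))) hYk
      (fun s => φ s u) (fun k s => φk k s u) (fun s => hφ' s u)
      (fun k s => hφk' k s u) (fun k => by simpa using (hφk0 k u).trans (hφ0 u).symm) t ht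
      (fun ε hε => error_unif L X hX P hlip hconv _ hfc t hε)
  · -- backward time: run the reversed flows
    have hf' : ∀ s : ℝ, HasDerivAt (fun s => φ (-s) u) (-(X (φ (-s) u))) s := by
      intro s
      have := (hφ' (-s) u).scomp s (hasDerivAt_neg s)
      simp at this; exact this
    have hfk' : ∀ (k : ℕ) (s : ℝ),
        HasDerivAt (fun s => φk k (-s) u) (-(P k (X (P k (φk k (-s) u))))) s := by
      intro k s
      have := (hφk' k (-s) u).scomp s (hasDerivAt_neg s)
      simp at this; exact this
    have hYk' : ∀ k, LipschitzWith L (fun y => -(P k (X (P k y)))) := by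
      intro k
      have := LipschitzWith.comp (LipschitzWith.id.neg) (hYk k)
      simp at this; exact this
    have hXneg : LipschitzWith L (fun y => -(X y)) := by
      have := LipschitzWith.comp (LipschitzWith.id.neg) hX
      simp at this; exact this
    have hfc : Continuous (fun s => φ (-s) u) := by
      rw [continuous_iff_continuousAt]; exact fun s => (hf' s).continuousAt
    have herr : ∀ ε : ℝ, 0 < ε → ∀ᶠ k in Filter.atTop,
        ∀ s ∈ Set.Icc (0:ℝ) (-t),
          dist (-(X (φ (-s) u))) (-(P k (X (P k (φ (-s) u))))) ≤ ε := by
      intro ε hε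
      filter_upwards [error_unif L X hX P hlip hconv (fun s => φ (-s) u) hfc (-t) hε]
        with k hk s hs
      simpa [dist_neg_neg] using hk s hs
    have := flow_comparison L (fun y => -(X y)) (fun k y => -(P k (X (P k y)))) hYk'
      (fun s => φ (-s) u) (fun k s => φk k (-s) u) hf' hfk'
      (fun k => by simp [hφk0, hφ0]) (-t) (by linarith) herr
    simpa using this
end

section
/- Non-standard characterization of convergence to zero: let s : ℕ → ℝ be a sequence. Then s_n → 0 as n → ∞ if and only if for every hypernatural N (i.e. every germ N over the hyperfilter on ℕ with values in ℕ) which is unlimited in the sense that n < N for every standard n ∈ ℕ, the hyperreal number *s(N) := Germ.map s N is infinitesimal. -/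
open Filter Filter.Germ

/-- **Non-standard characterization of convergence to zero** (Proposition 3.9
of the paper): a real sequence `s` tends to `0` if and only if for every
unlimited hypernatural `N` the hyperreal `*s(N) = Germ.map s N` is
infinitesimal. -/
theorem tendsto_zero_iff_infinitesimal_at_unlimited (s : ℕ → ℝ) :
    Filter.Tendsto s Filter.atTop (nhds 0) ↔
      ∀ N : Filter.Germ (Filter.hyperfilter ℕ : Filter ℕ) ℕ,
        (∀ n : ℕ, (n : Filter.Germ (Filter.hyperfilter ℕ : Filter ℕ) ℕ) < N) →
        Hyperreal.Infinitesimal (N.map s : Hyperreal) := by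
  constructor
  · intro hs N hN
    induction N using Filter.Germ.inductionOn with
    | h f =>
      refine Hyperreal.infinitesimal_def.mpr ?_
      intro r hr
      obtain ⟨M, hM⟩ := (Metric.tendsto_atTop.mp hs) r hr
      have hMf : ∀ᶠ k in (Filter.hyperfilter ℕ : Filter ℕ), (M : ℕ) < f k := Filter.Germ.coe_lt.mp (hN M)
      have key : ∀ᶠ k in (Filter.hyperfilter ℕ : Filter ℕ), -r < s (f k) ∧ s (f k) < r := by
        filter_upwards [hMf] with k hk
        have := hM (f k) hk.le
        rw [Real.dist_eq, sub_zero, abs_lt] at this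
        exact this
      constructor
      · exact Filter.Germ.coe_lt.mpr <| by
          filter_upwards [key] with k hk
          simpa using hk.1
      · exact Filter.Germ.coe_lt.mpr <| by
          filter_upwards [key] with k hk
          exact hk.2
  · intro h
    by_contra hns
    rw [Metric.tendsto_atTop] at hns
    push_neg at hns
    obtain ⟨ε, hε, hseq⟩ := hns
    choose f hf hsf using hseq
    set N : Filter.Germ (Filter.hyperfilter ℕ : Filter ℕ) ℕ := ↑f with hNdef
    have hNun : ∀ n : ℕ, (n : Filter.Germ (Filter.hyperfilter ℕ : Filter ℕ) ℕ) < N := by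
      intro n
      refine Filter.Germ.coe_lt.mpr ?_
      have : ∀ᶠ k in atTop, n < f k := by
        filter_upwards [Filter.eventually_gt_atTop n] with k hk
        exact lt_of_lt_of_le hk (hf k)
      exact this.filter_mono Nat.hyperfilter_le_atTop
    have hinf := h N hNun
    replace hinf := Hyperreal.infinitesimal_def.mp hinf
    have := (hinf ε hε).2
    have habs : (N.map s : Hyperreal) < (ε : ℝ) := this
    have : ∀ᶠ k in (Filter.hyperfilter ℕ : Filter ℕ), s (f k) < ε := Filter.Germ.coe_lt.mp habs
    have h2 : (-(ε : Hyperreal)) < N.map s := (hinf ε hε).1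
    have h2' : ∀ᶠ k in (Filter.hyperfilter ℕ : Filter ℕ), -ε < s (f k) :=
      Filter.Germ.coe_lt (f := fun _ => -ε) (g := fun k => s (f k)) |>.mp h2
    have : ∀ᶠ k in (Filter.hyperfilter ℕ : Filter ℕ), |s (f k)| < ε := by
      filter_upwards [this, h2'] with k h1 h2
      exact abs_lt.mpr ⟨h2, h1⟩
    have hfalse : ∀ᶠ k in (Filter.hyperfilter ℕ : Filter ℕ), False := by
      filter_upwards [this] with k hk
      have := hsf k
      rw [Real.dist_eq, sub_zero] at this
      exact absurd hk (not_lt.mpr this)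
    exact Filter.NeBot.ne (by infer_instance) (Filter.eventually_false_iff_eq_bot.mp hfalse)
end
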